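/- arXiv:1304.0785 — 2 statements merged into one kernel-verified Lean document; each statement's English description precedes it below -/
import Mathlib

section
/- Let F be an infinite field and α an ordinal (or index set) with α ≥ 2. Let V = {s ∈ F^α : s_i ≠ 0 for only finitely many i} be the weak Cartesian space. Then the hyperplane w = {s ∈ V : s_0 + 2 = s_1 + 2·Σ_{i>1} s_i} is not contained in any finite union of hyperplanes q_i = {s ∈ V : s_i + 1 = Σ_{j≠i} s_j} (i in a finite set) together with finitely many hyperplanes p of the form {s ∈ V : t + Σ_i r_i s_i = 0} with r_0 ≠ 0 and r_j = 0 for some j > 0. -/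
open Polynomial


/-- In the weak space of finite-support sequences over a field of
characteristic 0, the hyperplane `w = {s : s₀ + 2 = s₁ + 2·Σ_{i∉{0,1}} s_i}` is
not covered by finitely many hyperplanes `q_i = {s : s_i + 1 = Σ_{j≠i} s_j}`
together with finitely many hyperplanes `{s : t + Σ r_i s_i = 0}` having
`r₀ ≠ 0` and some vanishing coefficient `r_j = 0`, `j ≠ 0`. -/
theorem stmt3 (F : Type*) [Field F] [CharZero F] (α : Type*) [DecidableEq α]
    (e0 e1 : α) (h01 : e0 ≠ e1)
    (I : Finset α) (n : ℕ) (t : Fin n → F) (r : Fin n → (α →₀ F))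
    (hr0 : ∀ k, r k e0 ≠ 0) (hrj : ∀ k, ∃ j, j ≠ e0 ∧ r k j = 0) :
    ¬ ({s : α →₀ F | s e0 + 2 = s e1 + 2 * ∑ i ∈ s.support \ {e0, e1}, s i} ⊆
        (⋃ i ∈ I, {s : α →₀ F | s i + 1 = ∑ j ∈ s.support \ {i}, s j}) ∪
        (⋃ k : Fin n, {s : α →₀ F | t k + ∑ i ∈ (r k).support, r k i * s i = 0})) := by
  classical
  intro hsub
  choose c hc0 hcr using hrj
  set u : Fin n → F := fun k => if c k = e1 then 0 else 1 with hu
  set Gp : Polynomial F := ∑ k : Fin n, C (u k) * X ^ (k.1 + 1) with hGp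
  set P : Fin n → Polynomial F := fun k =>
    C (t k - 2 * r k e0) + C (r k e0 + r k e1) * X ^ (n + 1)
      + ∑ k' : Fin n, C ((2 * r k e0 + r k (c k')) * u k') * X ^ (k'.1 + 1) with hP
  set Q : α → Polynomial F := fun i =>
    if i = e0 then C 1 - Gp
    else if i = e1 then C (-3) + C 3 * Gp
    else C (-3) + C 2 * X ^ (n + 1) + C 3 * Gp
      - C 2 * ∑ k : Fin n, C (if c k = i then u k else 0) * X ^ (k.1 + 1) with hQ
  -- coefficient helpers
  have coeff_sum : ∀ (a : Fin n → F) (m : ℕ),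
      (∑ k : Fin n, C (a k) * X ^ (k.1 + 1)).coeff m
        = ∑ k : Fin n, if m = k.1 + 1 then a k else 0 := by
    intro a m
    rw [Polynomial.finset_sum_coeff]
    refine Finset.sum_congr rfl fun k _ => ?_
    rw [Polynomial.coeff_C_mul, Polynomial.coeff_X_pow]
    split <;> simp
  have coeff_sum_zero : ∀ (a : Fin n → F),
      (∑ k : Fin n, C (a k) * X ^ (k.1 + 1)).coeff 0 = 0 := by
    intro a
    rw [coeff_sum]
    exact Finset.sum_eq_zero fun k _ => by simp
  have coeff_sum_top : ∀ (a : Fin n → F),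
      (∑ k : Fin n, C (a k) * X ^ (k.1 + 1)).coeff (n + 1) = 0 := by
    intro a
    rw [coeff_sum]
    refine Finset.sum_eq_zero fun k _ => ?_
    have hk := k.isLt
    rw [if_neg (by omega)]
  have coeff_sum_mid : ∀ (a : Fin n → F) (k0 : Fin n),
      (∑ k : Fin n, C (a k) * X ^ (k.1 + 1)).coeff (k0.1 + 1) = a k0 := by
    intro a k0
    rw [coeff_sum]
    have : ∀ k : Fin n, (if (k0.1 + 1 : ℕ) = k.1 + 1 then a k else 0)
        = if k0 = k then a k else 0 := by
      intro k
      congr 1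
      simp [Fin.val_inj]
    simp_rw [this]
    simp
  -- nonvanishing of the polynomials
  have hPne : ∀ k, P k ≠ 0 := by
    intro k h0
    by_cases hk : c k = e1
    · have hco : (P k).coeff (n + 1) = r k e0 + r k e1 := by
        simp only [hP]
        rw [Polynomial.coeff_add, Polynomial.coeff_add, Polynomial.coeff_C,
          if_neg (Nat.succ_ne_zero n), Polynomial.coeff_C_mul, Polynomial.coeff_X_pow,
          if_pos rfl, coeff_sum_top]
        ring
      rw [h0, Polynomial.coeff_zero] at hco
      have h1 : r k e1 = 0 := by rw [← hk]; exact hcr k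
      rw [h1, add_zero] at hco
      exact hr0 k hco.symm
    · have hco : (P k).coeff (k.1 + 1) = 2 * r k e0 := by
        simp only [hP]
        have hk1 := k.isLt
        rw [Polynomial.coeff_add, Polynomial.coeff_add, Polynomial.coeff_C,
          if_neg (Nat.succ_ne_zero _), Polynomial.coeff_C_mul, Polynomial.coeff_X_pow,
          if_neg (by omega), coeff_sum_mid]
        rw [hcr k]
        simp [hu, hk]
      rw [h0, Polynomial.coeff_zero] at hco
      have := mul_eq_zero.mp hco.symm
      rcases this with h | h
      · exact two_ne_zero h
      · exact hr0 k h
  have hGp0 : Gp.coeff 0 = 0 := coeff_sum_zero u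
  have hGptop : Gp.coeff (n + 1) = 0 := coeff_sum_top u
  have hQne : ∀ i, Q i ≠ 0 := by
    intro i h0
    by_cases hi0 : i = e0
    · have hco : (Q i).coeff 0 = 1 := by
        simp only [hQ, if_pos hi0]
        rw [Polynomial.coeff_sub, Polynomial.coeff_C, if_pos rfl, hGp0, sub_zero]
      rw [h0, Polynomial.coeff_zero] at hco
      exact one_ne_zero hco.symm
    · by_cases hi1 : i = e1
      · have hco : (Q i).coeff 0 = -3 := by
          simp only [hQ, if_neg hi0, if_pos hi1]
          rw [Polynomial.coeff_add, Polynomial.coeff_C, if_pos rfl,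
            Polynomial.coeff_C_mul, hGp0, mul_zero, add_zero]
        rw [h0, Polynomial.coeff_zero] at hco
        norm_num at hco
      · have hco : (Q i).coeff (n + 1) = 2 := by
          simp only [hQ, if_neg hi0, if_neg hi1]
          rw [Polynomial.coeff_sub, Polynomial.coeff_add, Polynomial.coeff_add,
            Polynomial.coeff_C, if_neg (Nat.succ_ne_zero n),
            Polynomial.coeff_C_mul, Polynomial.coeff_X_pow, if_pos rfl,
            Polynomial.coeff_C_mul, hGptop, Polynomial.coeff_C_mul, coeff_sum_top]
          ring
        rw [h0, Polynomial.coeff_zero] at hco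
        norm_num at hco
  -- choose a good evaluation point z
  have hfin : ((⋃ k : Fin n, {z : F | (P k).IsRoot z}) ∪
      ⋃ i ∈ I, {z : F | (Q i).IsRoot z}).Finite := by
    apply Set.Finite.union
    · exact Set.finite_iUnion fun k => Polynomial.finite_setOf_isRoot (hPne k)
    · exact Set.Finite.biUnion I.finite_toSet fun i _ =>
        Polynomial.finite_setOf_isRoot (hQne i)
  obtain ⟨z, hz⟩ := hfin.exists_notMem
  have hzP : ∀ k, (P k).eval z ≠ 0 := by
    intro k hk
    exact hz (Or.inl (Set.mem_iUnion.mpr ⟨k, hk⟩))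
  have hzQ : ∀ i ∈ I, (Q i).eval z ≠ 0 := by
    intro i hi hq
    exact hz (Or.inr (Set.mem_biUnion hi hq))
  -- the witness point
  set b : F := z ^ (n + 1) with hb
  set y : Fin n → F := fun k => u k * z ^ (k.1 + 1) with hy
  set G' : F := ∑ k : Fin n, y k with hG'
  set A : F := b + 2 * G' - 2 with hA
  set s0 : α →₀ F := Finsupp.single e0 A + Finsupp.single e1 b
    + ∑ k : Fin n, Finsupp.single (c k) (y k) with hs0
  have hy1 : ∀ k, c k = e1 → y k = 0 := by
    intro k hk; simp [hy, hu, hk]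
  have hGeval : Gp.eval z = G' := by
    simp [hGp, hG', hy, Polynomial.eval_finset_sum]
  -- evaluations of s0
  have hse0 : s0 e0 = A := by
    rw [hs0, Finsupp.add_apply, Finsupp.add_apply, Finset.sum_apply']
    rw [Finsupp.single_apply, if_pos rfl, Finsupp.single_apply, if_neg (Ne.symm h01)]
    rw [Finset.sum_eq_zero fun k _ => by
      rw [Finsupp.single_apply, if_neg (hc0 k)]]
    ring
  have hse1 : s0 e1 = b := by
    rw [hs0, Finsupp.add_apply, Finsupp.add_apply, Finset.sum_apply']
    rw [Finsupp.single_apply, if_neg h01, Finsupp.single_apply, if_pos rfl]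
    rw [Finset.sum_eq_zero fun k _ => by
      rw [Finsupp.single_apply]
      split
      · exact hy1 k ‹_›
      · rfl]
    ring
  have hsio : ∀ i, i ≠ e0 → i ≠ e1 → s0 i = ∑ k : Fin n, if c k = i then y k else 0 := by
    intro i hi0 hi1
    rw [hs0, Finsupp.add_apply, Finsupp.add_apply, Finset.sum_apply']
    rw [Finsupp.single_apply, if_neg (Ne.symm hi0), Finsupp.single_apply, if_neg (Ne.symm hi1)]
    rw [Finset.sum_congr rfl fun k _ => Finsupp.single_apply]
    ring
  -- total sum of s0
  have hT : ∑ i ∈ s0.support, s0 i = A + b + G' := by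
    have : ∑ i ∈ s0.support, s0 i = s0.sum fun _ v => v := rfl
    rw [this, hs0]
    rw [Finsupp.sum_add_index' (fun _ => rfl) (fun _ _ _ => rfl)]
    rw [Finsupp.sum_add_index' (fun _ => rfl) (fun _ _ _ => rfl)]
    rw [← Finsupp.sum_finsetSum_index (fun _ => rfl) (fun _ _ _ => rfl)]
    rw [Finsupp.sum_single_index rfl, Finsupp.sum_single_index rfl]
    rw [Finset.sum_congr rfl fun k _ => Finsupp.sum_single_index rfl]
  -- sum decomposition lemmas
  have hsplit2 : ∑ i ∈ s0.support \ {e0, e1}, s0 i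
      = (∑ i ∈ s0.support, s0 i) - s0 e0 - s0 e1 := by
    have h2 : ∑ i ∈ s0.support ∩ {e0, e1}, s0 i + ∑ i ∈ s0.support \ {e0, e1}, s0 i
        = ∑ i ∈ s0.support, s0 i := Finset.sum_inter_add_sum_sdiff _ _ _
    have h1 : ∑ i ∈ s0.support ∩ {e0, e1}, s0 i = s0 e0 + s0 e1 := by
      have hsub' : ∑ i ∈ s0.support ∩ {e0, e1}, s0 i = ∑ i ∈ ({e0, e1} : Finset α), s0 i := by
        refine Finset.sum_subset Finset.inter_subset_right fun i hi hni => ?_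
        by_contra hne
        exact hni (Finset.mem_inter.mpr ⟨Finsupp.mem_support_iff.mpr hne, hi⟩)
      rw [hsub', Finset.sum_pair h01]
    linear_combination h2 - h1
  have hsplit1 : ∀ i : α, ∑ j ∈ s0.support \ {i}, s0 j
      = (∑ j ∈ s0.support, s0 j) - s0 i := by
    intro i
    have h2 : ∑ j ∈ s0.support ∩ {i}, s0 j + ∑ j ∈ s0.support \ {i}, s0 j
        = ∑ j ∈ s0.support, s0 j := Finset.sum_inter_add_sum_sdiff _ _ _
    have h1 : ∑ j ∈ s0.support ∩ {i}, s0 j = s0 i := by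
      have hsub' : ∑ j ∈ s0.support ∩ {i}, s0 j = ∑ j ∈ ({i} : Finset α), s0 j := by
        refine Finset.sum_subset Finset.inter_subset_right fun j hj hnj => ?_
        by_contra hne
        exact hnj (Finset.mem_inter.mpr ⟨Finsupp.mem_support_iff.mpr hne, hj⟩)
      rw [hsub', Finset.sum_singleton]
    linear_combination h2 - h1
  -- s0 lies on the hyperplane w
  have hmemw : s0 ∈ {s : α →₀ F | s e0 + 2 = s e1 + 2 * ∑ i ∈ s.support \ {e0, e1}, s i} := by
    show s0 e0 + 2 = s0 e1 + 2 * ∑ i ∈ s0.support \ {e0, e1}, s0 i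
    rw [hsplit2, hT, hse0, hse1, hA]
    ring
  -- now derive a contradiction
  rcases hsub hmemw with hq | hp
  · -- q case
    rw [Set.mem_iUnion₂] at hq
    obtain ⟨i, hiI, hi⟩ := hq
    rw [Set.mem_setOf_eq, hsplit1 i, hT] at hi
    refine hzQ i hiI ?_
    by_cases hi0 : i = e0
    · subst hi0
      rw [hse0] at hi
      simp only [hQ, if_pos rfl, Polynomial.eval_sub, Polynomial.eval_C, hGeval]
      rw [hA] at hi
      linear_combination -hi
    · by_cases hi1 : i = e1
      · subst hi1
        rw [hse1] at hi
        simp only [hQ, if_neg hi0, eq_self_iff_true, if_true, Polynomial.eval_add,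
          Polynomial.eval_mul, Polynomial.eval_C, hGeval]
        rw [hA] at hi
        linear_combination -hi
      · rw [hsio i hi0 hi1] at hi
        simp only [hQ, if_neg hi0, if_neg hi1, Polynomial.eval_sub, Polynomial.eval_add,
          Polynomial.eval_mul, Polynomial.eval_C, Polynomial.eval_pow, Polynomial.eval_X,
          hGeval, Polynomial.eval_finset_sum]
        have hterm : ∑ k : Fin n, (if c k = i then u k else 0) * z ^ (k.1 + 1)
            = ∑ k : Fin n, if c k = i then y k else 0 := by
          refine Finset.sum_congr rfl fun k _ => ?_
          by_cases hck : c k = i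
          · rw [if_pos hck, if_pos hck, hy]
          · rw [if_neg hck, if_neg hck, zero_mul]
        rw [hterm, ← hb]
        rw [hA] at hi
        linear_combination -hi
  · -- p case
    rw [Set.mem_iUnion] at hp
    obtain ⟨k, hk⟩ := hp
    rw [Set.mem_setOf_eq] at hk
    refine hzP k ?_
    have hsum : ∑ i ∈ (r k).support, r k i * s0 i
        = r k e0 * A + r k e1 * b + ∑ k' : Fin n, r k (c k') * y k' := by
      have single_case : ∀ (j : α) (v : F),
          ∑ i ∈ (r k).support, r k i * (Finsupp.single j v) i = r k j * v := by
        intro j v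
        rw [Finset.sum_congr rfl fun i _ => by rw [Finsupp.single_apply]]
        simp_rw [mul_ite, mul_zero]
        rw [Finset.sum_ite_eq]
        split
        · rfl
        · rw [Finsupp.notMem_support_iff.mp ‹_›, zero_mul]
      calc ∑ i ∈ (r k).support, r k i * s0 i
          = ∑ i ∈ (r k).support, (r k i * (Finsupp.single e0 A) i
              + r k i * (Finsupp.single e1 b) i
              + ∑ k' : Fin n, r k i * (Finsupp.single (c k') (y k')) i) := by
            refine Finset.sum_congr rfl fun i _ => ?_
            rw [hs0, Finsupp.add_apply, Finsupp.add_apply, Finset.sum_apply',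
              mul_add, mul_add, Finset.mul_sum]
        _ = r k e0 * A + r k e1 * b + ∑ k' : Fin n, r k (c k') * y k' := by
            rw [Finset.sum_add_distrib, Finset.sum_add_distrib, single_case, single_case,
              Finset.sum_comm]
            congr 1
            exact Finset.sum_congr rfl fun k' _ => single_case (c k') (y k')
    rw [hsum] at hk
    have hPeval : (P k).eval z
        = t k + (r k e0 * A + r k e1 * b + ∑ k' : Fin n, r k (c k') * y k') := by
      simp only [hP, Polynomial.eval_add, Polynomial.eval_mul, Polynomial.eval_C,
        Polynomial.eval_pow, Polynomial.eval_X, Polynomial.eval_finset_sum]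
      have hre : ∑ k' : Fin n, (2 * r k e0 + r k (c k')) * u k' * z ^ (k'.1 + 1)
          = 2 * r k e0 * G' + ∑ k' : Fin n, r k (c k') * y k' := by
        rw [hG', Finset.mul_sum, ← Finset.sum_add_distrib]
        refine Finset.sum_congr rfl fun k' _ => ?_
        simp only [hy]
        ring
      rw [hre, hA, ← hb]
      ring
    rw [hPeval, hk]
end

section
/- Let F be a field of characteristic 0, α ≥ 2, and V the weak space of finite-support sequences in F^α based at 0. Let y = {s ∈ V : s_0 + 1 = Σ_{i>0} s_i}. Then for every s ∈ V, the singleton {s} is the intersection C_1({r}) ∩ C_0({t}) of cylindrifications of singletons of elements of y, where r = (s_0, s_0 + 1 − Σ_{i>1} s_i, s_2, s_3, …) and t = (Σ_{i>0} s_i − 1, s_1, s_2, …) both belong to y; here C_i(X) = {u ∈ V : ∃v ∈ X, u_j = v_j for all j ≠ i}. -/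
private lemma sum_sdiff_super {F α : Type*} [Field F] [DecidableEq α]
    (f : α →₀ F) (A B : Finset α) (hB : f.support ⊆ B) :
    ∑ i ∈ f.support \ A, f i = ∑ i ∈ B \ A, f i := by
  apply Finset.sum_subset (Finset.sdiff_subset_sdiff hB (le_refl A))
  intro x hx hx'
  have : x ∉ f.support := fun h => hx' (Finset.mem_sdiff.2 ⟨h, (Finset.mem_sdiff.1 hx).2⟩)
  simpa using this

/-- Every singleton of the weak space is the intersection of
cylindrifications (in coordinates `e1` and `e0`) of singletons of elements of
`y = {v : v_{e0} + 1 = Σ_{i ≠ e0} v_i}`. -/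
theorem stmt4 (F : Type*) [Field F] [CharZero F] (α : Type*) [DecidableEq α]
    (e0 e1 : α) (h01 : e0 ≠ e1) (s : α →₀ F) :
    let y : Set (α →₀ F) := {v | v e0 + 1 = ∑ i ∈ v.support \ {e0}, v i}
    let C : α → Set (α →₀ F) → Set (α →₀ F) :=
      fun i X => {u | ∃ v ∈ X, ∀ j, j ≠ i → u j = v j}
    let r : α →₀ F := s.update e1 (s e0 + 1 - ∑ i ∈ s.support \ {e0, e1}, s i)
    let t : α →₀ F := s.update e0 ((∑ i ∈ s.support \ {e0}, s i) - 1)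
    r ∈ y ∧ t ∈ y ∧ ({s} : Set (α →₀ F)) = C e1 {r} ∩ C e0 {t} := by
  intro y C r t
  set B : Finset α := insert e1 (insert e0 s.support) with hB
  have hsB : s.support ⊆ B := fun x hx => by simp [hB, hx]
  have hrB : r.support ⊆ B := by
    intro x hx
    rcases eq_or_ne x e1 with rfl | hne
    · simp [hB]
    · have : s x ≠ 0 := by
        have := Finsupp.mem_support_iff.1 hx
        rwa [show r x = s x by simp [r, Finsupp.coe_update, Function.update_of_ne hne]] at this
      exact hsB (Finsupp.mem_support_iff.2 this)
  have htB : t.support ⊆ B := by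
    intro x hx
    rcases eq_or_ne x e0 with rfl | hne
    · simp [hB]
    · have : s x ≠ 0 := by
        have := Finsupp.mem_support_iff.1 hx
        rwa [show t x = s x by simp [t, Finsupp.coe_update, Function.update_of_ne hne]] at this
      exact hsB (Finsupp.mem_support_iff.2 this)
  have hr0 : r e0 = s e0 := by simp [r, Finsupp.coe_update, Function.update_of_ne h01]
  have hr1 : r e1 = s e0 + 1 - ∑ i ∈ s.support \ {e0, e1}, s i := by
    simp [r, Finsupp.coe_update]
  have hrj : ∀ j, j ≠ e1 → r j = s j := fun j hj => by
    simp [r, Finsupp.coe_update, Function.update_of_ne hj]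
  have ht0 : t e0 = (∑ i ∈ s.support \ {e0}, s i) - 1 := by
    simp [t, Finsupp.coe_update]
  have htj : ∀ j, j ≠ e0 → t j = s j := fun j hj => by
    simp [t, Finsupp.coe_update, Function.update_of_ne hj]
  have key1 : ∑ i ∈ B \ ({e0, e1} : Finset α), r i = ∑ i ∈ s.support \ {e0, e1}, s i := by
    rw [sum_sdiff_super s _ B hsB]
    apply Finset.sum_congr rfl
    intro x hx
    have : x ≠ e1 := fun h => (Finset.mem_sdiff.1 hx).2 (by simp [h])
    exact hrj x this
  have hry : r ∈ y := by
    show r e0 + 1 = ∑ i ∈ r.support \ {e0}, r i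
    rw [sum_sdiff_super r {e0} B hrB]
    have he1mem : e1 ∈ B \ ({e0} : Finset α) := by simp [hB, h01.symm]
    have hsplit : B \ ({e0} : Finset α) = insert e1 (B \ {e0, e1}) := by
      ext x
      rcases eq_or_ne x e1 with rfl | hx <;> simp [*, h01.symm]
    rw [hsplit, Finset.sum_insert (by simp), key1, hr0, hr1]
    ring
  have hty : t ∈ y := by
    show t e0 + 1 = ∑ i ∈ t.support \ {e0}, t i
    rw [sum_sdiff_super t {e0} B htB, ht0]
    have : ∑ i ∈ B \ ({e0} : Finset α), t i = ∑ i ∈ s.support \ {e0}, s i := by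
      rw [sum_sdiff_super s _ B hsB]
      apply Finset.sum_congr rfl
      intro x hx
      exact htj x (fun h => (Finset.mem_sdiff.1 hx).2 (by simp [h]))
    rw [this]; ring
  refine ⟨hry, hty, ?_⟩
  ext u
  constructor
  · rintro rfl
    exact ⟨⟨r, rfl, fun j hj => (hrj j hj).symm⟩, ⟨t, rfl, fun j hj => (htj j hj).symm⟩⟩
  · rintro ⟨⟨_, rfl, h1⟩, ⟨_, rfl, h2⟩⟩
    show u = s
    ext j
    rcases eq_or_ne j e1 with rfl | hj1
    · rw [h2 _ h01.symm, htj _ h01.symm]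
    · rw [h1 j hj1, hrj j hj1]
end
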